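/- arXiv:2601.12545 — 2 statements merged into one kernel-verified Lean document; each statement's English description precedes it below -/
import Mathlib

section
/- There exists a bounded measurable function φ : [0,∞) → ℝ² satisfying the interval-excitation condition of Assumption 1 (sequences t_k, T_k, λ_k with t_{k+1} ≥ t_k + T_k, inf T_k > 0, sup T_k < ∞, ∫_{t_k}^{t_k+T_k} φφᵀ ≥ λ_k I₂, Σ λ_k² = ∞) but not satisfying persistency of excitation (¬∃ T, μ > 0 with ∫_t^{t+T} φφᵀ ≥ μ I₂ for all t). -/
/-- Gram matrix of the regressor `φ` over the interval `[a, b]`: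
`∫ₐᵇ φ(s) φ(s)ᵀ ds`, computed entrywise. -/
noncomputable def gram (φ : ℝ → Fin 2 → ℝ) (a b : ℝ) : Matrix (Fin 2) (Fin 2) ℝ :=
  Matrix.of fun i j => ∫ s in a..b, φ s i * φ s j

open Classical in
/-- Witness regressor. -/
noncomputable def phiW : ℝ → Fin 2 → ℝ := fun s =>
  if ∃ k : ℕ, ((k : ℝ) + 1) ^ 2 < s ∧ s ≤ ((k : ℝ) + 1) ^ 2 + 1 then ![1, 0]
  else if ∃ k : ℕ, ((k : ℝ) + 1) ^ 2 + 1 < s ∧ s ≤ ((k : ℝ) + 1) ^ 2 + 2 then ![0, 1]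
  else 0

lemma phiW_eq1 {k : ℕ} {s : ℝ} (h1 : ((k : ℝ) + 1) ^ 2 < s) (h2 : s ≤ ((k : ℝ) + 1) ^ 2 + 1) :
    phiW s = ![1, 0] := by
  unfold phiW
  rw [if_pos ⟨k, h1, h2⟩]

lemma phiW_eq2 {k : ℕ} {s : ℝ} (h1 : ((k : ℝ) + 1) ^ 2 + 1 < s) (h2 : s ≤ ((k : ℝ) + 1) ^ 2 + 2) :
    phiW s = ![0, 1] := by
  unfold phiW
  rw [if_neg, if_pos ⟨k, h1, h2⟩]
  rintro ⟨m, hm1, hm2⟩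
  rcases le_or_gt m k with h | h
  · have : (m : ℝ) ≤ k := by exact_mod_cast h
    nlinarith
  · have : (k : ℝ) + 1 ≤ m := by exact_mod_cast h
    nlinarith [Nat.cast_nonneg (α := ℝ) k]

lemma phiW_eq0 {k : ℕ} {s : ℝ} (h1 : ((k : ℝ) + 1) ^ 2 + 2 < s) (h2 : s ≤ ((k : ℝ) + 2) ^ 2) :
    phiW s = 0 := by
  have key : ∀ m : ℕ, ¬ (((m : ℝ) + 1) ^ 2 < s ∧ s ≤ ((m : ℝ) + 1) ^ 2 + 2) := by
    rintro m ⟨hm1, hm2⟩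
    rcases le_or_gt m k with h | h
    · have : (m : ℝ) ≤ k := by exact_mod_cast h
      nlinarith [Nat.cast_nonneg (α := ℝ) m]
    · have : (k : ℝ) + 1 ≤ m := by exact_mod_cast h
      nlinarith [Nat.cast_nonneg (α := ℝ) k]
  unfold phiW
  rw [if_neg, if_neg]
  · rintro ⟨m, hm1, hm2⟩
    exact key m ⟨by linarith, hm2⟩
  · rintro ⟨m, hm1, hm2⟩
    exact key m ⟨hm1, by linarith⟩

lemma phiW_abs (s : ℝ) (i : Fin 2) : |phiW s i| ≤ 1 := by
  unfold phiW
  split_ifs <;> fin_cases i <;> norm_num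

lemma measurable_phiW : Measurable phiW := by
  unfold phiW
  refine Measurable.ite ?_ measurable_const (Measurable.ite ?_ measurable_const measurable_const)
  · rw [Set.setOf_exists]
    exact MeasurableSet.iUnion fun k => measurableSet_Ioc
  · rw [Set.setOf_exists]
    exact MeasurableSet.iUnion fun k => measurableSet_Ioc

lemma phiW_intInt (i j : Fin 2) (a b : ℝ) :
    IntervalIntegrable (fun s => phiW s i * phiW s j) MeasureTheory.volume a b := by
  have hm : Measurable (fun s => phiW s i * phiW s j) :=
    ((measurable_pi_apply i).comp measurable_phiW).mul
      ((measurable_pi_apply j).comp measurable_phiW)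
  rw [intervalIntegrable_iff]
  apply MeasureTheory.Measure.integrableOn_of_bounded (M := 1)
  · exact measure_Ioc_lt_top.ne
  · exact hm.aestronglyMeasurable
  · filter_upwards with s
    have := phiW_abs s i
    have := phiW_abs s j
    rw [Real.norm_eq_abs, abs_mul]
    nlinarith [abs_nonneg (phiW s i), abs_nonneg (phiW s j)]

lemma integral_const_on_Ioc {f : ℝ → ℝ} {a b : ℝ} (hab : a ≤ b) (c : ℝ)
    (h : ∀ s ∈ Set.Ioc a b, f s = c) :
    ∫ s in a..b, f s = (b - a) * c := by
  rw [intervalIntegral.integral_of_le hab,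
    MeasureTheory.setIntegral_congr_fun measurableSet_Ioc h,
    MeasureTheory.setIntegral_const, Real.volume_real_Ioc_of_le hab,
    smul_eq_mul]

lemma gram_active (k : ℕ) :
    gram phiW (((k : ℝ) + 1) ^ 2) (((k : ℝ) + 1) ^ 2 + 2) = 1 := by
  ext i j
  set a := ((k : ℝ) + 1) ^ 2 with ha
  have h1 : ∫ s in a..(a + 1), phiW s i * phiW s j = ![1, 0] i * ![(1:ℝ), 0] j := by
    rw [integral_const_on_Ioc (by linarith) _ (fun s hs => by
      rw [phiW_eq1 (k := k) hs.1 hs.2])]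
    ring
  have h2 : ∫ s in (a + 1)..(a + 2), phiW s i * phiW s j = ![0, 1] i * ![(0:ℝ), 1] j := by
    rw [integral_const_on_Ioc (by linarith) _ (fun s hs => by
      rw [phiW_eq2 (k := k) hs.1 hs.2])]
    ring
  have hsplit := intervalIntegral.integral_add_adjacent_intervals
    (phiW_intInt i j a (a + 1)) (phiW_intInt i j (a + 1) (a + 2))
  show (∫ s in a..(a + 2), phiW s i * phiW s j) = (1 : Matrix (Fin 2) (Fin 2) ℝ) i j
  rw [← hsplit, h1, h2]
  fin_cases i <;> fin_cases j <;> simp [Matrix.one_apply]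

lemma gram_dead (k : ℕ) {T : ℝ} (hT0 : 0 ≤ T)
    (hT : ((k : ℝ) + 1) ^ 2 + 2 + T ≤ ((k : ℝ) + 2) ^ 2) :
    gram phiW (((k : ℝ) + 1) ^ 2 + 2) (((k : ℝ) + 1) ^ 2 + 2 + T) = 0 := by
  ext i j
  show (∫ s in _.._, phiW s i * phiW s j) = (0 : Matrix (Fin 2) (Fin 2) ℝ) i j
  rw [integral_const_on_Ioc (by linarith) 0 (fun s hs => by
    rw [phiW_eq0 (k := k) hs.1 (le_trans hs.2 hT)]; simp)]
  simp

theorem interval_excitation_strictly_weaker_than_pe :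
    ∃ φ : ℝ → Fin 2 → ℝ,
      Measurable φ ∧
      (∃ C : ℝ, ∀ s : ℝ, ∀ i, |φ s i| ≤ C) ∧
      (∃ t T lam : ℕ → ℝ,
        (∀ k, 0 ≤ t k) ∧
        (∀ k, t (k + 1) ≥ t k + T k) ∧
        (∃ δ : ℝ, 0 < δ ∧ ∀ k, δ ≤ T k) ∧
        (∃ C : ℝ, ∀ k, T k ≤ C) ∧
        (∀ k, 0 < lam k) ∧
        (∀ k, (gram φ (t k) (t k + T k) - lam k • (1 : Matrix (Fin 2) (Fin 2) ℝ)).PosSemidef) ∧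
        ¬ Summable (fun k => lam k ^ 2)) ∧
      ¬ (∃ T : ℝ, 0 < T ∧ ∃ μ : ℝ, 0 < μ ∧
        ∀ t : ℝ, 0 ≤ t →
          (gram φ t (t + T) - μ • (1 : Matrix (Fin 2) (Fin 2) ℝ)).PosSemidef) := by
  refine ⟨phiW, measurable_phiW, ⟨1, phiW_abs⟩, ?_, ?_⟩
  · refine ⟨fun k => ((k : ℝ) + 1) ^ 2, fun _ => 2, fun _ => 1,
      fun k => by positivity, fun k => ?_, ⟨2, by norm_num, fun _ => le_refl 2⟩,
      ⟨2, fun _ => le_refl 2⟩, fun _ => one_pos, fun k => ?_, ?_⟩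
    · push_cast
      nlinarith [Nat.cast_nonneg (α := ℝ) k]
    · rw [gram_active k, one_smul, sub_self]
      exact Matrix.PosSemidef.zero
    · intro h
      simp only [one_pow, summable_const_iff] at h
      exact one_ne_zero h
  · rintro ⟨T, hT, μ, hμ, h⟩
    set k : ℕ := ⌈T⌉₊ with hk
    have hTk : T ≤ (k : ℝ) := Nat.le_ceil T
    have ht0 : (0 : ℝ) ≤ ((k : ℝ) + 1) ^ 2 + 2 := by positivity
    have hg : gram phiW (((k : ℝ) + 1) ^ 2 + 2) (((k : ℝ) + 1) ^ 2 + 2 + T) = 0 :=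
      gram_dead k hT.le (by nlinarith [Nat.cast_nonneg (α := ℝ) k])
    have hpsd := h (((k : ℝ) + 1) ^ 2 + 2) ht0
    rw [hg] at hpsd
    have := hpsd.dotProduct_mulVec_nonneg ![1, 0]
    rw [zero_sub] at this
    simp [Matrix.mulVec, dotProduct, Fin.sum_univ_two, Matrix.one_apply] at this
    linarith
end

section
/- Let V(t) = (J/2)·x̃₂(t)² where x̃₂ is differentiable and satisfies J·(d/dt)x̃₂ = −(k₁+θ₁)·x̃₂ − θ₂·(tanh(ϑ x̂₂) − tanh(ϑ x₂)) with x̃₂ = x̂₂ − x₂, and k₁, θ₁ > 0, θ₂ ≥ 0, ϑ > 0. Then V̇(t) ≤ −(2(k₁+θ₁)/J)·V(t) for all t, and consequently |x̃₂(t)| ≤ |x̃₂(0)|·exp(−((k₁+θ₁)/J)·t) for t ≥ 0. -/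
lemma tanh_mono_aux {a b : ℝ} (h : a ≤ b) : Real.tanh a ≤ Real.tanh b := by
  rw [Real.tanh_eq_sinh_div_cosh, Real.tanh_eq_sinh_div_cosh,
    div_le_div_iff₀ (Real.cosh_pos a) (Real.cosh_pos b)]
  have h1 : Real.sinh (a - b) ≤ 0 := by
    have := Real.sinh_le_sinh.mpr (sub_nonpos.mpr h)
    simpa using this
  have h2 := Real.sinh_sub a b
  nlinarith

theorem ii_observer_exponential_convergence
    (J k₁ θ₁ θ₂ ϑ : ℝ) (hJ : 0 < J) (hk₁ : 0 < k₁) (hθ₁ : 0 < θ₁)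
    (hθ₂ : 0 ≤ θ₂) (hϑ : 0 < ϑ)
    (xh₂ x₂ d : ℝ → ℝ)
    (hd : ∀ t, HasDerivAt (fun s => xh₂ s - x₂ s) (d t) t)
    (heq : ∀ t, J * d t = -(k₁ + θ₁) * (xh₂ t - x₂ t)
      - θ₂ * (Real.tanh (ϑ * xh₂ t) - Real.tanh (ϑ * x₂ t))) :
    (∀ t, deriv (fun s => (J / 2) * (xh₂ s - x₂ s) ^ 2) t
        ≤ -(2 * (k₁ + θ₁) / J) * ((J / 2) * (xh₂ t - x₂ t) ^ 2)) ∧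
      ∀ t, 0 ≤ t →
        |xh₂ t - x₂ t| ≤ |xh₂ 0 - x₂ 0| * Real.exp (-((k₁ + θ₁) / J) * t) := by
  set α : ℝ := (k₁ + θ₁) / J with hαdef
  have hα : α * J = k₁ + θ₁ := div_mul_cancel₀ _ hJ.ne'
  -- sign fact
  have key : ∀ t, 0 ≤ (xh₂ t - x₂ t) *
      (Real.tanh (ϑ * xh₂ t) - Real.tanh (ϑ * x₂ t)) := by
    intro t
    rcases le_total (x₂ t) (xh₂ t) with h | h
    · exact mul_nonneg (by linarith)
        (sub_nonneg.mpr (tanh_mono_aux (by nlinarith)))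
    · have h1 : xh₂ t - x₂ t ≤ 0 := by linarith
      have h2 : Real.tanh (ϑ * xh₂ t) - Real.tanh (ϑ * x₂ t) ≤ 0 :=
        sub_nonpos.mpr (tanh_mono_aux (by nlinarith))
      nlinarith
  -- key quadratic inequality
  have quad : ∀ t, J * (2 * (xh₂ t - x₂ t) * d t + 2 * α * (xh₂ t - x₂ t) ^ 2) ≤ 0 := by
    intro t
    have h1 := heq t
    have h2 := mul_nonneg hθ₂ (key t)
    have h3 : J * (2 * (xh₂ t - x₂ t) * d t + 2 * α * (xh₂ t - x₂ t) ^ 2)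
        = 2 * (xh₂ t - x₂ t) * (J * d t) + 2 * (α * J) * (xh₂ t - x₂ t) ^ 2 := by ring
    rw [h3, h1, hα]
    nlinarith
  have quad' : ∀ t, 2 * (xh₂ t - x₂ t) * d t + 2 * α * (xh₂ t - x₂ t) ^ 2 ≤ 0 := by
    intro t
    have := quad t
    nlinarith
  constructor
  · intro t
    have hVd : HasDerivAt (fun s => (J / 2) * (xh₂ s - x₂ s) ^ 2)
        (J * (xh₂ t - x₂ t) * d t) t := by
      have h := ((hd t).fun_pow 2).const_mul (J / 2)
      exact h.congr_deriv (by simp only [Nat.cast_ofNat]; ring)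
    rw [hVd.deriv]
    have hrhs : -(2 * (k₁ + θ₁) / J) * ((J / 2) * (xh₂ t - x₂ t) ^ 2)
        = -(k₁ + θ₁) * (xh₂ t - x₂ t) ^ 2 := by
      field_simp
    rw [hrhs]
    have := quad' t
    have h3 : α * J = k₁ + θ₁ := hα
    nlinarith
  · intro t ht
    set g : ℝ → ℝ := fun s => (xh₂ s - x₂ s) ^ 2 * Real.exp (2 * α * s) with hg
    have hgd : ∀ s, HasDerivAt g
        ((2 * (xh₂ s - x₂ s) * d s + 2 * α * (xh₂ s - x₂ s) ^ 2) * Real.exp (2 * α * s)) s := by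
      intro s
      have he : HasDerivAt (fun u => Real.exp (2 * α * u)) (2 * α * Real.exp (2 * α * s)) s := by
        have := ((hasDerivAt_id s).const_mul (2 * α)).exp
        simpa [mul_comm] using this
      have h := ((hd s).fun_pow 2).mul he
      exact h.congr_deriv (by simp only [Nat.cast_ofNat]; ring)
    have hanti : Antitone g := by
      apply antitone_of_deriv_nonpos
      · exact fun s => (hgd s).differentiableAt
      · intro s
        rw [(hgd s).deriv]
        exact mul_nonpos_of_nonpos_of_nonneg (quad' s) (Real.exp_pos _).le
    have hgle : g t ≤ g 0 := hanti ht
    simp only [hg, mul_zero, Real.exp_zero, mul_one] at hgle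
    have hsq : (xh₂ t - x₂ t) ^ 2 ≤ (|xh₂ 0 - x₂ 0| * Real.exp (-α * t)) ^ 2 := by
      have hexp : Real.exp (-α * t) ^ 2 = Real.exp (-(2 * α) * t) := by
        rw [sq, ← Real.exp_add]; ring_nf
      have h2 : (xh₂ t - x₂ t) ^ 2 ≤ (xh₂ 0 - x₂ 0) ^ 2 * Real.exp (-(2 * α) * t) := by
        rw [neg_mul, Real.exp_neg, ← div_eq_mul_inv, le_div_iff₀ (Real.exp_pos _)]
        linarith
      calc (xh₂ t - x₂ t) ^ 2 ≤ (xh₂ 0 - x₂ 0) ^ 2 * Real.exp (-(2 * α) * t) := h2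
        _ = (|xh₂ 0 - x₂ 0| * Real.exp (-α * t)) ^ 2 := by
            rw [mul_pow, sq_abs, hexp]
    have := Real.sqrt_le_sqrt hsq
    rwa [Real.sqrt_sq_eq_abs, Real.sqrt_sq (mul_nonneg (abs_nonneg _) (Real.exp_pos _).le)]
      at this
end
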